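/- For every θ ∈ (0, π], each coefficient a_j of the characteristic polynomial det(xI − H_θ(G)) = Σ_j a_j x^{n-j} of a θ-Hermitian adjacency matrix lies in the subring ℤ[cos θ] of ℝ; i.e., there is an integer polynomial f_j with a_j = f_j(cos θ). -/

import Mathlib

open Polynomial Matrix Real

/-- The θ-Hermitian adjacency matrix of a mixed graph on `Fin n` with arc
relation `A` (no loops). -/
noncomputable def MGHerm {n : ℕ} (A : Fin n → Fin n → Bool) (θ : ℝ) : Matrix (Fin n) (Fin n) ℂ :=
  fun x y =>
    if A x y ∧ A y x then 1
    else if A x y then Complex.exp (θ * Complex.I)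
    else if A y x then Complex.exp (-θ * Complex.I)
    else 0

/-- A mixed graph is bipartite if its underlying graph is bipartite. -/
def MGBipartite {n : ℕ} (A : Fin n → Fin n → Bool) : Prop :=
  ∃ S : Set (Fin n), ∀ x y : Fin n, (A x y ∨ A y x) → (x ∈ S ↔ y ∉ S)

/-- The spectrum of `M` (as a root multiset of its characteristic polynomial)
is symmetric with respect to the origin, with multiplicities. -/
def SymSpec {n : ℕ} (M : Matrix (Fin n) (Fin n) ℂ) : Prop :=
  ∀ μ : ℂ, M.charpoly.rootMultiplicity μ = M.charpoly.rootMultiplicity (-μ)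

lemma charpoly_transpose' {n : Type*} [DecidableEq n] [Fintype n] {R : Type*} [CommRing R]
    (M : Matrix n n R) : Mᵀ.charpoly = M.charpoly := by
  rw [Matrix.charpoly, Matrix.charpoly]
  have : charmatrix Mᵀ = (charmatrix M)ᵀ := by
    ext i j
    by_cases h : i = j
    · subst h; simp [charmatrix_apply_eq]
    · simp [charmatrix_apply_ne _ _ _ h, charmatrix_apply_ne _ _ _ (Ne.symm h)]
  rw [this, det_transpose]

/-- The subring `ℤ[cos θ] + ℤ[cos θ]·c` of `ℂ`, where `c = exp(iθ)`. -/
noncomputable def cosSubring (t : ℝ) (c : ℂ) (h : c ^ 2 = 2 * (t : ℂ) * c - 1) : Subring ℂ where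
  carrier := {z | ∃ f g : Polynomial ℤ,
    z = f.eval₂ (Int.castRingHom ℂ) (t : ℂ) + g.eval₂ (Int.castRingHom ℂ) (t : ℂ) * c}
  zero_mem' := ⟨0, 0, by simp⟩
  one_mem' := ⟨1, 0, by simp⟩
  add_mem' := by
    rintro a b ⟨f, g, rfl⟩ ⟨f', g', rfl⟩
    exact ⟨f + f', g + g', by simp [eval₂_add]; ring⟩
  neg_mem' := by
    rintro a ⟨f, g, rfl⟩
    exact ⟨-f, -g, by simp [eval₂_neg]; ring⟩
  mul_mem' := by
    rintro a b ⟨f, g, rfl⟩ ⟨f', g', rfl⟩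
    refine ⟨f * f' - g * g', f * g' + g * f' + 2 * X * (g * g'), ?_⟩
    simp only [eval₂_add, eval₂_sub, eval₂_mul, eval₂_X, eval₂_ofNat]
    linear_combination (g.eval₂ (Int.castRingHom ℂ) (t : ℝ) *
      g'.eval₂ (Int.castRingHom ℂ) (t : ℝ)) * h

theorem charpoly_coeff_mem_int_adjoin_cos {n : ℕ} (A : Fin n → Fin n → Bool)
    (hA : ∀ v, A v v = false) (θ : ℝ) (hθ : θ ∈ Set.Ioc (0 : ℝ) Real.pi) (j : ℕ) :
    ∃ f : Polynomial ℤ,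
      (MGHerm A θ).charpoly.coeff (n - j) =
        ((Polynomial.eval₂ (Int.castRingHom ℝ) (Real.cos θ) f : ℝ) : ℂ) := by
  set t : ℝ := Real.cos θ with ht
  set c : ℂ := Complex.exp (θ * Complex.I) with hc
  have hcval : c = (t : ℂ) + (Real.sin θ : ℂ) * Complex.I := by
    rw [hc, Complex.exp_mul_I, Complex.ofReal_cos, Complex.ofReal_sin]
  have hcconj : Complex.exp (-θ * Complex.I) = (starRingEnd ℂ) c := by
    rw [hc, ← Complex.exp_conj]
    congr 1
    rw [_root_.map_mul, Complex.conj_I, Complex.conj_ofReal]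
    ring
  have hre : c.re = t := by rw [hcval]; simp
  have hsum : c + (starRingEnd ℂ) c = 2 * (t : ℂ) := by
    rw [Complex.add_conj, hre]; push_cast; ring
  have hprod : c * (starRingEnd ℂ) c = 1 := by
    rw [hc, ← hcconj, ← Complex.exp_add]
    ring_nf
    exact Complex.exp_zero
  have hq : c ^ 2 = 2 * (t : ℂ) * c - 1 := by
    have := hsum
    have h2 : (starRingEnd ℂ) c = 2 * (t : ℝ) - c := by linear_combination hsum
    calc c ^ 2 = c * c := sq c
    _ = 2 * (t : ℂ) * c - c * ((starRingEnd ℂ) c) := by rw [h2]; push_cast; ring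
    _ = 2 * (t : ℂ) * c - 1 := by rw [hprod]
  set S := cosSubring t c hq with hS
  -- entries of MGHerm lie in S
  have hmem : ∀ x y, MGHerm A θ x y ∈ S := by
    intro x y
    unfold MGHerm
    split_ifs
    · exact one_mem S
    · exact ⟨0, 1, by simp; exact hc.symm⟩
    · rw [hcconj]
      refine ⟨2 * X, -1, ?_⟩
      simp only [eval₂_mul, eval₂_X, eval₂_neg, eval₂_one, eval₂_ofNat]
      linear_combination hsum
    · exact zero_mem S
  -- the matrix over S
  let M' : Matrix (Fin n) (Fin n) S := fun x y => ⟨MGHerm A θ x y, hmem x y⟩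
  have hmap : (M'.map (SubringClass.subtype S)) = MGHerm A θ := by
    ext x y; rfl
  have hcp : (MGHerm A θ).charpoly = M'.charpoly.map (SubringClass.subtype S) := by
    rw [← hmap, Matrix.charpoly_map]
  have hcoeffS : (MGHerm A θ).charpoly.coeff (n - j) ∈ S := by
    rw [hcp, Polynomial.coeff_map]
    exact (M'.charpoly.coeff (n - j)).2
  -- Hermitian: conj of the coefficient equals itself
  have hherm : (MGHerm A θ).map (starRingEnd ℂ) = (MGHerm A θ)ᵀ := by
    ext x y
    simp only [Matrix.map_apply, Matrix.transpose_apply]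
    unfold MGHerm
    have hcconj' : Complex.exp (-(↑θ * Complex.I)) = (starRingEnd ℂ) c := by
      rw [← neg_mul]; exact hcconj
    by_cases hxy : A x y <;> by_cases hyx : A y x <;>
      simp [hxy, hyx, hcconj', ← hc, Complex.conj_conj]
  have hreal : (starRingEnd ℂ) ((MGHerm A θ).charpoly.coeff (n - j)) =
      (MGHerm A θ).charpoly.coeff (n - j) := by
    have h1 : ((MGHerm A θ).map (starRingEnd ℂ)).charpoly = (MGHerm A θ).charpoly := by
      rw [hherm, charpoly_transpose']
    have h2 := Matrix.charpoly_map (MGHerm A θ) (starRingEnd ℂ : ℂ →+* ℂ)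
    rw [h1] at h2
    have := congrArg (fun p => Polynomial.coeff p (n - j)) h2
    simpa [Polynomial.coeff_map] using this.symm
  -- combine
  obtain ⟨f, g, hfg⟩ := hcoeffS
  refine ⟨f + g * X, ?_⟩
  have hcastf : ∀ p : Polynomial ℤ,
      p.eval₂ (Int.castRingHom ℂ) (t : ℂ) = ((p.eval₂ (Int.castRingHom ℝ) t : ℝ) : ℂ) := by
    intro p
    rw [show (Int.castRingHom ℂ) = (Complex.ofRealHom).comp (Int.castRingHom ℝ) by ext; simp]
    exact (Polynomial.hom_eval₂ p (Int.castRingHom ℝ) Complex.ofRealHom t).symm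
  set z := (MGHerm A θ).charpoly.coeff (n - j) with hz
  set p : ℝ := f.eval₂ (Int.castRingHom ℝ) t with hp
  set q : ℝ := g.eval₂ (Int.castRingHom ℝ) t with hqdef
  have hfg' : z = (p : ℂ) + (q : ℂ) * c := by rw [hfg, hcastf f, hcastf g]
  have hconjz : z = (p : ℂ) + (q : ℂ) * (starRingEnd ℂ) c := by
    conv_lhs => rw [← hreal, hfg']
    simp only [_root_.map_add, _root_.map_mul, Complex.conj_ofReal]
  have : (2 : ℂ) * z = 2 * ((p : ℂ) + (q : ℂ) * (t : ℂ)) := by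
    calc (2 : ℂ) * z = ((p : ℂ) + (q : ℂ) * c) + ((p : ℂ) + (q : ℂ) * (starRingEnd ℂ) c) := by
          rw [← hfg', ← hconjz]; ring
    _ = 2 * (p : ℂ) + (q : ℂ) * (c + (starRingEnd ℂ) c) := by ring
    _ = _ := by rw [hsum]; ring
  have hzval : z = (p : ℂ) + (q : ℂ) * (t : ℂ) := by
    have := mul_left_cancel₀ (two_ne_zero (α := ℂ)) this
    exact this
  rw [hzval]
  simp only [eval₂_add, eval₂_mul, eval₂_X]
  push_cast
  ring
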